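/- Let ψ : [0, ∞) → (0, ∞) be non-decreasing and convex with ψ(0) > 0. Let ψ̄(s) := sup { a·s + b : a, b ≥ 0 and a·r + b ≤ ψ(r) for all r ≥ 0 } be the supremum of nonnegative affine minorants of ψ. Then ψ̄ equals the convex subadditive envelope of ψ, i.e., ψ̄(s) = sup { f(s) : f : [0,∞) → ℝ convex, subadditive, f ≤ ψ }. -/
import Mathlib

/-- Supporting line at `s > 0` for a convex function on `[0,∞)`:
there is a slope `a` with `a ≥ (f s - f 0)/s` such that the line through
`(s, f s)` with slope `a` lies below `f` on `[0,∞)`. -/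
lemma support_line (f : ℝ → ℝ) (hf : ConvexOn ℝ (Set.Ici (0:ℝ)) f)
    (s : ℝ) (hs : 0 < s) :
    ∃ a : ℝ, (f s - f 0) / s ≤ a ∧ ∀ r : ℝ, 0 ≤ r → f s + a * (r - s) ≤ f r := by
  set S : Set ℝ := {z : ℝ | ∃ r : ℝ, 0 ≤ r ∧ r < s ∧ z = (f s - f r) / (s - r)} with hS
  have hne : ((f s - f 0) / s) ∈ S := ⟨0, le_refl 0, hs, by simp⟩
  have hub : ∀ t : ℝ, s < t → ∀ z ∈ S, z ≤ (f t - f s) / (t - s) := by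
    rintro t hts z ⟨r, hr0, hrs, rfl⟩
    exact hf.slope_mono_adjacent (Set.mem_Ici.2 hr0) (Set.mem_Ici.2 (by linarith)) hrs hts
  have hbdd : BddAbove S := ⟨(f (s+1) - f s) / ((s+1) - s), fun z hz => hub (s+1) (by linarith) z hz⟩
  refine ⟨sSup S, le_csSup hbdd hne, fun r hr => ?_⟩
  rcases lt_trichotomy r s with h | h | h
  · have hmem : (f s - f r) / (s - r) ∈ S := ⟨r, hr, h, rfl⟩
    have h1 : (f s - f r) / (s - r) ≤ sSup S := le_csSup hbdd hmem
    have h2 : f s - f r ≤ sSup S * (s - r) := by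
      rw [div_le_iff₀ (by linarith)] at h1; linarith [h1]
    nlinarith [h2]
  · subst h; simp
  · have h1 : sSup S ≤ (f r - f s) / (r - s) :=
      csSup_le ⟨_, hne⟩ (hub r h)
    have h2 : sSup S * (r - s) ≤ f r - f s := by
      rw [le_div_iff₀ (by linarith)] at h1; linarith [h1]
    linarith

theorem stmt5 (ψ ψbar : ℝ → ℝ)
    (hmono : MonotoneOn ψ (Set.Ici (0:ℝ)))
    (hconv : ConvexOn ℝ (Set.Ici (0:ℝ)) ψ)
    (hC1 : ContDiff ℝ 1 ψ)
    (hpos : 0 < ψ 0)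
    (hstr : ∀ s : ℝ, 0 < s → ψ 0 < ψ s)
    (hdef : ∀ s : ℝ, ψbar s = sSup {y : ℝ | ∃ a b : ℝ, 0 ≤ a ∧ 0 ≤ b ∧
      (∀ r : ℝ, 0 ≤ r → a * r + b ≤ ψ r) ∧ y = a * s + b}) :
    ∀ s : ℝ, 0 ≤ s → ψbar s = sSup {y : ℝ | ∃ f : ℝ → ℝ,
      ConvexOn ℝ (Set.Ici (0:ℝ)) f ∧
      (∀ r t : ℝ, 0 ≤ r → 0 ≤ t → f (r + t) ≤ f r + f t) ∧
      (∀ r : ℝ, 0 ≤ r → f r ≤ ψ r) ∧ y = f s} := by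
  intro s hs
  set A : Set ℝ := {y : ℝ | ∃ a b : ℝ, 0 ≤ a ∧ 0 ≤ b ∧
      (∀ r : ℝ, 0 ≤ r → a * r + b ≤ ψ r) ∧ y = a * s + b} with hA
  set B : Set ℝ := {y : ℝ | ∃ f : ℝ → ℝ,
      ConvexOn ℝ (Set.Ici (0:ℝ)) f ∧
      (∀ r t : ℝ, 0 ≤ r → 0 ≤ t → f (r + t) ≤ f r + f t) ∧
      (∀ r : ℝ, 0 ≤ r → f r ≤ ψ r) ∧ y = f s} with hB
  -- the constant ψ 0 belongs to A
  have hconstA : (ψ 0 : ℝ) ∈ A := by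
    refine ⟨0, ψ 0, le_refl 0, hpos.le, fun r hr => ?_, by ring⟩
    simpa using hmono (Set.mem_Ici.2 (le_refl 0)) (Set.mem_Ici.2 hr) hr
  have hAne : A.Nonempty := ⟨_, hconstA⟩
  -- A is bounded above by ψ s
  have hAbdd : BddAbove A := by
    refine ⟨ψ s, ?_⟩
    rintro y ⟨a, b, ha, hb, hle, rfl⟩
    exact hle s hs
  -- B is bounded above by ψ s
  have hBbdd : BddAbove B := by
    refine ⟨ψ s, ?_⟩
    rintro y ⟨f, hfc, hfs, hfle, rfl⟩
    exact hfle s hs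
  have hAB : A ⊆ B := by
    rintro y ⟨a, b, ha, hb, hle, rfl⟩
    refine ⟨fun r => a * r + b, ?_, ?_, hle, rfl⟩
    · exact (ConvexOn.smul ha (convexOn_id (convex_Ici 0))).add_const b
    · intro r t hr ht
      show a * (r + t) + b ≤ (a * r + b) + (a * t + b)
      nlinarith
  have hBne : B.Nonempty := ⟨_, hAB hconstA⟩
  rw [hdef s]
  apply le_antisymm
  · exact csSup_le_csSup hBbdd hAne hAB
  · -- hard direction: every f in B satisfies f s ≤ sSup A
    apply csSup_le hBne
    rintro y ⟨f, hfc, hfsub, hfle, rfl⟩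
    by_cases hcase : f s ≤ ψ 0
    · exact le_trans hcase (le_csSup hAbdd hconstA)
    push_neg at hcase
    -- then f s > ψ 0 ≥ f 0, and in particular s > 0
    have hf0 : f 0 ≤ ψ 0 := hfle 0 le_rfl
    have hspos : 0 < s := by
      rcases hs.lt_or_eq with h | h
      · exact h
      · exfalso; rw [← h] at hcase; linarith
    obtain ⟨a, haslope, hsupp⟩ := support_line f hfc s hspos
    have hapos : 0 < a := by
      have : 0 < (f s - f 0) / s := div_pos (by linarith) hspos
      linarith
    -- b := f s - a * s is nonnegative thanks to subadditivity at 2s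
    have hb : 0 ≤ f s - a * s := by
      have h1 : f s + a * (s + s - s) ≤ f (s + s) := hsupp (s + s) (by linarith)
      have h2 : f (s + s) ≤ f s + f s := hfsub s s hs hs
      nlinarith
    have hmem : (a * s + (f s - a * s)) ∈ A := by
      refine ⟨a, f s - a * s, hapos.le, hb, fun r hr => ?_, rfl⟩
      have := hsupp r hr
      have := hfle r hr
      nlinarith
    have : f s = a * s + (f s - a * s) := by ring
    rw [this]
    exact le_csSup hAbdd hmem
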